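/- Define the gradient-ascent vector field F on (0,1)^4 × (0,1) by F_i(x,y) := x_i·(1−x_i)·∂u^st(x,y)/∂x_i for i = 1,2,3,4 and F_5(x,y) := −y·(1−y)·∂u^st(x,y)/∂y. Then F admits the closed form F_i(x,y) = x_i·(1−x_i)·(u1−u2−u3+u4)·(y−y^o)·∂x^st(x,y)/∂x_i and F_5(x,y) = −y·(1−y)·(u1−u2−u3+u4)·[(y−y^o)·∂x^st(x,y)/∂y + (x^st(x,y)−x^o)]. -/

import Mathlib

/-- Δ(x,y) := x̃1·y + x̃2·ỹ + x3·y + x4·ỹ -/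
noncomputable def Del (x1 x2 x3 x4 y : ℝ) : ℝ :=
  (1 - x1) * y + (1 - x2) * (1 - y) + x3 * y + x4 * (1 - y)

/-- Marginalized strategy x^st(x,y) := (x3·y + x4·ỹ)/Δ(x,y). -/
noncomputable def xst (x1 x2 x3 x4 y : ℝ) : ℝ :=
  (x3 * y + x4 * (1 - y)) / Del x1 x2 x3 x4 y

/-- Stationary payoff u^st(x,y). -/
noncomputable def ust (u1 u2 u3 u4 x1 x2 x3 x4 y : ℝ) : ℝ :=
  xst x1 x2 x3 x4 y * y * u1 + xst x1 x2 x3 x4 y * (1 - y) * u2 +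
  (1 - xst x1 x2 x3 x4 y) * y * u3 + (1 - xst x1 x2 x3 x4 y) * (1 - y) * u4

/-- Partial derivative of a function of z = (x1,x2,x3,x4,y) with respect to the j-th
coordinate. -/
noncomputable def pderiv5 (f : (Fin 5 → ℝ) → ℝ) (z : Fin 5 → ℝ) (j : Fin 5) : ℝ :=
  deriv (fun t => f (Function.update z j t)) (z j)

/-- x^st as a function of z = (x1,x2,x3,x4,y). -/
noncomputable def xstZ (z : Fin 5 → ℝ) : ℝ := xst (z 0) (z 1) (z 2) (z 3) (z 4)

/-- u^st as a function of z = (x1,x2,x3,x4,y). -/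
noncomputable def ustZ (u1 u2 u3 u4 : ℝ) (z : Fin 5 → ℝ) : ℝ :=
  ust u1 u2 u3 u4 (z 0) (z 1) (z 2) (z 3) (z 4)

/-- The gradient-ascent vector field: F_i = x_i(1−x_i)·∂u^st/∂x_i for i = 1,…,4 and
F_5 = −y(1−y)·∂u^st/∂y. -/
noncomputable def Fvec (u1 u2 u3 u4 : ℝ) (z : Fin 5 → ℝ) (i : Fin 5) : ℝ :=
  if i = 4 then -(z 4 * (1 - z 4) * pderiv5 (ustZ u1 u2 u3 u4) z 4)
  else z i * (1 - z i) * pderiv5 (ustZ u1 u2 u3 u4) z i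

/-- The Jacobian matrix of the gradient-ascent vector field at z. -/
noncomputable def Jmat (u1 u2 u3 u4 : ℝ) (z : Fin 5 → ℝ) : Matrix (Fin 5) (Fin 5) ℝ :=
  Matrix.of fun i j => pderiv5 (fun w => Fvec u1 u2 u3 u4 w i) z j

/-- closed form of the gradient-ascent vector field. -/
theorem stmt14 (u1 u2 u3 u4 : ℝ)
    (h12 : u1 > u2) (h13 : u1 > u3) (h42 : u4 > u2) (h43 : u4 > u3)
    (x1 x2 x3 x4 y : ℝ)
    (h1 : x1 ∈ Set.Ioo (0 : ℝ) 1) (h2 : x2 ∈ Set.Ioo (0 : ℝ) 1)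
    (h3 : x3 ∈ Set.Ioo (0 : ℝ) 1) (h4 : x4 ∈ Set.Ioo (0 : ℝ) 1)
    (hy : y ∈ Set.Ioo (0 : ℝ) 1) :
    (∀ i : Fin 5, i ≠ 4 →
      Fvec u1 u2 u3 u4 ![x1, x2, x3, x4, y] i =
        ![x1, x2, x3, x4, y] i * (1 - ![x1, x2, x3, x4, y] i) *
          (u1 - u2 - u3 + u4) * (y - (u4 - u2) / (u1 - u2 - u3 + u4)) *
          pderiv5 xstZ ![x1, x2, x3, x4, y] i) ∧
    Fvec u1 u2 u3 u4 ![x1, x2, x3, x4, y] 4 =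
      -(y * (1 - y) * (u1 - u2 - u3 + u4) *
        ((y - (u4 - u2) / (u1 - u2 - u3 + u4)) * pderiv5 xstZ ![x1, x2, x3, x4, y] 4 +
          (xst x1 x2 x3 x4 y - (u4 - u3) / (u1 - u2 - u3 + u4)))) := by
  obtain ⟨hx30, hx31⟩ := h3
  obtain ⟨hx40, hx41⟩ := h4
  obtain ⟨hy0, hy1⟩ := hy
  set z : Fin 5 → ℝ := ![x1, x2, x3, x4, y] with hzdef
  have hz4 : z 4 = y := rfl
  have hD : (0:ℝ) < u1 - u2 - u3 + u4 := by linarith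
  have hD0 : u1 - u2 - u3 + u4 ≠ 0 := ne_of_gt hD
  have key : ∀ w : Fin 5 → ℝ, ustZ u1 u2 u3 u4 w =
      ((u1 - u2 - u3 + u4) * w 4 - (u4 - u2)) * xstZ w +
        (w 4 * u3 + (1 - w 4) * u4) := by
    intro w
    simp only [ustZ, ust, xstZ]
    ring
  constructor
  · intro i hi
    have hfun : (fun t => ustZ u1 u2 u3 u4 (Function.update z i t)) =
        fun t => ((u1 - u2 - u3 + u4) * y - (u4 - u2)) *
          xstZ (Function.update z i t) + (y * u3 + (1 - y) * u4) := by
      funext t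
      rw [key]
      rw [Function.update_of_ne (Ne.symm hi), hz4]
    have hder : pderiv5 (ustZ u1 u2 u3 u4) z i =
        ((u1 - u2 - u3 + u4) * y - (u4 - u2)) * pderiv5 xstZ z i := by
      simp only [pderiv5, hfun]
      rw [deriv_add_const, deriv_const_mul_field]
    have hFi : Fvec u1 u2 u3 u4 z i = z i * (1 - z i) * pderiv5 (ustZ u1 u2 u3 u4) z i := by
      simp [Fvec, hi]
    rw [hFi, hder]
    field_simp
  · -- the y-component
    have hupd : ∀ t : ℝ, Function.update z 4 t = ![x1, x2, x3, x4, t] := by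
      intro t
      funext j
      fin_cases j <;> simp [z, Function.update]
    have hxfun : (fun t => xstZ (Function.update z 4 t)) =
        fun t => xst x1 x2 x3 x4 t := by
      funext t
      rw [hupd]
      simp [xstZ]
    have hufun : (fun t => ustZ u1 u2 u3 u4 (Function.update z 4 t)) =
        fun t => ((u1 - u2 - u3 + u4) * t - (u4 - u2)) * xst x1 x2 x3 x4 t +
          (t * u3 + (1 - t) * u4) := by
      funext t
      rw [key, hupd]
      have h4' : (![x1, x2, x3, x4, t] : Fin 5 → ℝ) 4 = t := rfl
      rw [h4']
      simp [xstZ]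
    have hDel : (0:ℝ) < Del x1 x2 x3 x4 y := by
      have a1 : (0:ℝ) < (1 - x1) * y := mul_pos (by linarith [h1.2]) hy0
      have a2 : (0:ℝ) < (1 - x2) * (1 - y) := mul_pos (by linarith [h2.2]) (by linarith)
      have a3 : (0:ℝ) < x3 * y := mul_pos hx30 hy0
      have a4 : (0:ℝ) < x4 * (1 - y) := mul_pos hx40 (by linarith)
      simp only [Del]
      linarith
    have hdenD : DifferentiableAt ℝ (fun t => Del x1 x2 x3 x4 t) y := by
      simp only [Del]
      fun_prop
    have hnumD : DifferentiableAt ℝ (fun t => x3 * t + x4 * (1 - t)) y := by fun_prop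
    have hf : DifferentiableAt ℝ (fun t => xst x1 x2 x3 x4 t) y := by
      simp only [xst]
      exact hnumD.div hdenD (ne_of_gt hDel)
    set f' : ℝ := deriv (fun t => xst x1 x2 x3 x4 t) y with hf'def
    have hC : HasDerivAt (fun t : ℝ => (u1 - u2 - u3 + u4) * t - (u4 - u2))
        (u1 - u2 - u3 + u4) y := by
      simpa using ((hasDerivAt_id y).const_mul (u1 - u2 - u3 + u4)).sub_const (u4 - u2)
    have hG : HasDerivAt (fun t : ℝ => t * u3 + (1 - t) * u4) (u3 - u4) y := by
      have := ((hasDerivAt_id y).mul_const u3).add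
        (((hasDerivAt_const y (1:ℝ)).sub (hasDerivAt_id y)).mul_const u4)
      convert this using 1
      · rfl
      · rfl
      · rfl
      · ring
    have htot : HasDerivAt
        (fun t : ℝ => ((u1 - u2 - u3 + u4) * t - (u4 - u2)) * xst x1 x2 x3 x4 t +
          (t * u3 + (1 - t) * u4))
        ((u1 - u2 - u3 + u4) * xst x1 x2 x3 x4 y +
          ((u1 - u2 - u3 + u4) * y - (u4 - u2)) * f' + (u3 - u4)) y :=
      (hC.mul hf.hasDerivAt).add hG
    have hderu : pderiv5 (ustZ u1 u2 u3 u4) z 4 =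
        (u1 - u2 - u3 + u4) * xst x1 x2 x3 x4 y +
          ((u1 - u2 - u3 + u4) * y - (u4 - u2)) * f' + (u3 - u4) := by
      simp only [pderiv5, hufun, hz4]
      exact htot.deriv
    have hderx : pderiv5 xstZ z 4 = f' := by
      simp only [pderiv5, hxfun, hz4, hf'def]
    have hF5 : Fvec u1 u2 u3 u4 z 4 =
        -(y * (1 - y) * pderiv5 (ustZ u1 u2 u3 u4) z 4) := by
      simp [Fvec, hz4]
    rw [hF5, hderu, hderx]
    field_simp
    ring
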